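/- Let A be a ring and Σ a set of morphisms between projective right A-modules. Then the class F_Σ = {Y a left A-module : σ ⊗_A Y is injective for all σ ∈ Σ} is closed under extensions, submodules, and arbitrary direct sums. -/

import Mathlib

open LinearMap TensorProduct

open LinearMap TensorProduct

section Aux
variable {A : Type} [CommRing A]

lemma aux_comm {P₁ P₀ X Y : Type} [AddCommGroup P₁] [Module A P₁]
    [AddCommGroup P₀] [Module A P₀] [AddCommGroup X] [Module A X] [AddCommGroup Y] [Module A Y]
    (σ : P₁ →ₗ[A] P₀) (f : X →ₗ[A] Y) (t : P₁ ⊗[A] X) :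
    rTensor Y σ (lTensor P₁ f t) = lTensor P₀ f (rTensor X σ t) := by
  rw [← comp_apply, rTensor_comp_lTensor, ← lTensor_comp_rTensor, comp_apply]

lemma aux_sub {P₁ P₀ X Y : Type} [AddCommGroup P₁] [Module A P₁]
    [AddCommGroup P₀] [Module A P₀] [AddCommGroup X] [Module A X] [AddCommGroup Y] [Module A Y]
    [Module.Flat A P₁]
    (σ : P₁ →ₗ[A] P₀) (f : X →ₗ[A] Y) (hf : Function.Injective f)
    (hY : Function.Injective (rTensor Y σ)) : Function.Injective (rTensor X σ) := by
  intro a b hab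
  exact (hY.comp (Module.Flat.lTensor_preserves_injective_linearMap f hf))
    (by simp only [Function.comp_apply, aux_comm, hab])

lemma aux_ext {P₁ P₀ X Y Z : Type} [AddCommGroup P₁] [Module A P₁]
    [AddCommGroup P₀] [Module A P₀] [AddCommGroup X] [Module A X] [AddCommGroup Y] [Module A Y]
    [AddCommGroup Z] [Module A Z]
    [Module.Flat A P₁] [Module.Flat A P₀]
    (σ : P₁ →ₗ[A] P₀) (f : X →ₗ[A] Y) (g : Y →ₗ[A] Z)
    (hf : Function.Injective f) (hg : Function.Surjective g)
    (hfg : LinearMap.ker g = LinearMap.range f)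
    (hX : Function.Injective (rTensor X σ)) (hZ : Function.Injective (rTensor Z σ)) :
    Function.Injective (rTensor Y σ) := by
  rw [injective_iff_map_eq_zero]
  intro y hy
  have hexact : Function.Exact f g := LinearMap.exact_iff.mpr hfg
  have hexact₁ : Function.Exact (lTensor P₁ f) (lTensor P₁ g) := lTensor_exact P₁ hexact hg
  have hgz : rTensor Z σ (lTensor P₁ g y) = 0 := by
    rw [aux_comm, hy, map_zero]
  have h0 : lTensor P₁ g y = 0 := hZ (by rw [hgz, map_zero])
  obtain ⟨x, hx⟩ := (hexact₁ y).mp h0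
  have h1 : lTensor P₀ f (rTensor X σ x) = 0 := by rw [← aux_comm, hx, hy]
  have hσx : rTensor X σ x = 0 :=
    Module.Flat.lTensor_preserves_injective_linearMap f hf (by rw [h1, map_zero])
  have hx0 : x = 0 := hX (by rw [hσx, map_zero])
  rw [← hx, hx0, map_zero]

end Aux

lemma aux_sum {A : Type} [CommRing A] {P₁ P₀ : Type} [AddCommGroup P₁] [Module A P₁]
    [AddCommGroup P₀] [Module A P₀] (σ : P₁ →ₗ[A] P₀)
    (J : Type) [DecidableEq J] (X : J → Type) [∀ j, AddCommGroup (X j)] [∀ j, Module A (X j)]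
    (hX : ∀ j, Function.Injective (rTensor (X j) σ)) :
    Function.Injective (rTensor (DirectSum J X) σ) := by
  classical
  set G : (DirectSum J (fun j => P₁ ⊗[A] X j)) →ₗ[A] DirectSum J (fun j => P₀ ⊗[A] X j) :=
    DirectSum.toModule A J _ (fun j => (DirectSum.lof A J (fun j => P₀ ⊗[A] X j) j).comp
      (rTensor (X j) σ)) with hG
  have hGcomp : ∀ (j : J) (t : DirectSum J (fun j => P₁ ⊗[A] X j)),
      (G t) j = rTensor (X j) σ (t j) := by
    intro j t
    induction t using DirectSum.induction_on with
    | zero => simp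
    | of k x =>
        rw [← DirectSum.lof_eq_of A, DirectSum.toModule_lof]
        simp only [comp_apply]
        by_cases h : j = k
        · subst h
          rw [DirectSum.lof_apply, DirectSum.lof_apply]
        · rw [DirectSum.lof_eq_of, DirectSum.lof_eq_of,
            DirectSum.of_eq_of_ne _ _ _ h, DirectSum.of_eq_of_ne _ _ _ h,
            map_zero]
    | add a b ha hb => simp [map_add, DirectSum.add_apply, ha, hb]
  have hGinj : Function.Injective G := by
    rw [injective_iff_map_eq_zero]
    intro t ht
    refine DFinsupp.ext fun j => ?_
    apply hX j
    rw [← hGcomp, ht]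
    simp
  have hsquare : ∀ t : P₁ ⊗[A] DirectSum J X,
      directSumRight A A P₀ X (rTensor (DirectSum J X) σ t)
        = G (directSumRight A A P₁ X t) := by
    intro t
    have : ((directSumRight A A P₀ X).toLinearMap.comp (rTensor (DirectSum J X) σ))
        = G.comp (directSumRight A A P₁ X).toLinearMap := by
      apply TensorProduct.ext'
      intro p x
      induction x using DirectSum.induction_on with
      | zero => simp
      | of k y =>
          rw [← DirectSum.lof_eq_of A]
          simp only [LinearMap.comp_apply, LinearEquiv.coe_coe, rTensor_tmul,
            directSumRight_tmul_lof, DirectSum.toModule_lof]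
          rw [hG, DirectSum.toModule_lof]
          simp
      | add a b ha hb =>
          have := congrArg₂ (· + ·) ha hb
          simpa [tmul_add, map_add] using this
    exact DFunLike.congr_fun this t
  intro a b hab
  apply (directSumRight A A P₁ X).injective
  apply hGinj
  rw [← hsquare, ← hsquare, hab]



section
variable (A : Type) [CommRing A] {ι : Type} (P₁ P₀ : ι → Type)
  [∀ i, AddCommGroup (P₁ i)] [∀ i, Module A (P₁ i)]
  [∀ i, AddCommGroup (P₀ i)] [∀ i, Module A (P₀ i)]
  (σ : ∀ i, P₁ i →ₗ[A] P₀ i)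

/-- `Y` is `Σ`-torsion-free: `σᵢ ⊗_A Y` is injective for every `i`. -/
def IsTorsionFreeFor (Y : Type*) [AddCommGroup Y] [Module A Y] : Prop :=
  ∀ i, Function.Injective (LinearMap.rTensor Y (σ i))

/-- For a set `Σ` of morphisms between projective `A`-modules, the class `F_Σ` of
`Σ`-torsion-free modules is closed under extensions, submodules and arbitrary direct sums. -/
theorem statement10
    (hproj₁ : ∀ i, Module.Projective A (P₁ i)) (hproj₀ : ∀ i, Module.Projective A (P₀ i)) :
    -- closed under extensions
    (∀ (X Y Z : Type) [AddCommGroup X] [Module A X] [AddCommGroup Y] [Module A Y]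
        [AddCommGroup Z] [Module A Z] (f : X →ₗ[A] Y) (g : Y →ₗ[A] Z),
      Function.Injective f → Function.Surjective g → LinearMap.ker g = LinearMap.range f →
      IsTorsionFreeFor A P₁ P₀ σ X → IsTorsionFreeFor A P₁ P₀ σ Z →
        IsTorsionFreeFor A P₁ P₀ σ Y) ∧
    -- closed under submodules
    (∀ (X Y : Type) [AddCommGroup X] [Module A X] [AddCommGroup Y] [Module A Y]
        (f : X →ₗ[A] Y), Function.Injective f →
      IsTorsionFreeFor A P₁ P₀ σ Y → IsTorsionFreeFor A P₁ P₀ σ X) ∧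
    -- closed under arbitrary direct sums
    (∀ (J : Type) [DecidableEq J] (X : J → Type) [∀ j, AddCommGroup (X j)]
        [∀ j, Module A (X j)],
      (∀ j, IsTorsionFreeFor A P₁ P₀ σ (X j)) → IsTorsionFreeFor A P₁ P₀ σ (DirectSum J X)) := by
  constructor
  · intro X Y Z _ _ _ _ _ _ f g hf hg hfg hX hZ i
    haveI := hproj₁ i; haveI := hproj₀ i
    exact aux_ext (σ i) f g hf hg hfg (hX i) (hZ i)
  constructor
  · intro X Y _ _ _ _ f hf hY i
    haveI := hproj₁ i
    exact aux_sub (σ i) f hf (hY i)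
  · intro J _ X _ _ hX i
    exact aux_sum (σ i) J X (fun j => hX j i)

end
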